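/- Every parity game with finitely many priorities is uniformly memoryless determined: there exist a Player-0 memoryless strategy σ and a Player-1 memoryless strategy τ such that W₀ᵐ(G,σ) ∪ W₁ᵐ(G,τ) = V. -/

import Mathlib

/-- A run in the graph `(V, E)`: an infinite `E`-path. -/
def IsRun {V : Type*} (E : Set (V × V)) (ρ : ℕ → V) : Prop :=
  ∀ n, (ρ n, ρ (n + 1)) ∈ E

/-- A run is compatible with a strategy `σ` of the player controlling `Vi`. -/
def Compatible {V : Type*} (Vi : Set V) (σ : V → V) (ρ : ℕ → V) : Prop :=
  ∀ n, ρ n ∈ Vi → ρ (n + 1) = σ (ρ n)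

/-- A memoryless strategy for the player controlling `Vi` (encoded as a total
function whose values matter only on `Vi`). -/
def IsStrategy {V : Type*} (Vi : Set V) (E : Set (V × V)) (σ : V → V) : Prop :=
  ∀ v ∈ Vi, (v, σ v) ∈ E

/-- The strategy `σ` of the player controlling `Vi` whose winning condition is
`Win` wins from `v`: every compatible run from `v` has its color sequence in `Win`. -/
def WinsFrom {V : Type*} {C : Type*} (Vi : Set V) (E : Set (V × V)) (π : V → C)
    (Win : Set (ℕ → C)) (σ : V → V) (v : V) : Prop :=
  ∀ ρ : ℕ → V, ρ 0 = v → IsRun E ρ → Compatible Vi σ ρ → (fun n => π (ρ n)) ∈ Win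

/-- `Wᵢᵐ(G, σ)`: the vertices from which `σ` wins. -/
def WinRegion {V : Type*} {C : Type*} (Vi : Set V) (E : Set (V × V)) (π : V → C)
    (Win : Set (ℕ → C)) (σ : V → V) : Set V :=
  {v | WinsFrom Vi E π Win σ v}

/-- `Wᵢᵐ(G)`: the vertices from which some memoryless strategy wins. -/
def WinRegionAll {V : Type*} {C : Type*} (Vi : Set V) (E : Set (V × V)) (π : V → C)
    (Win : Set (ℕ → C)) : Set V :=
  {v | ∃ σ, IsStrategy Vi E σ ∧ WinsFrom Vi E π Win σ v}

/-- Concatenation `w·ρ` of a finite word and an infinite sequence. -/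
def ListAppend {C : Type*} (w : List C) (ρ : ℕ → C) : ℕ → C :=
  fun n => if h : n < w.length then w.get ⟨n, h⟩ else ρ (n - w.length)

/-- `W` is prefix-independent: `wρ ∈ W ↔ ρ ∈ W`. -/
def PrefixIndependent {C : Type*} (W : Set (ℕ → C)) : Prop :=
  ∀ (w : List C) (ρ : ℕ → C), ListAppend w ρ ∈ W ↔ ρ ∈ W

/-- Uniform memoryless determinacy of the game `⟨V₀, V₁, E, π, W⟩`. -/
def UniformlyDetermined {V : Type*} {C : Type*} (V0 V1 : Set V) (E : Set (V × V))
    (π : V → C) (W : Set (ℕ → C)) : Prop :=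
  ∃ σ τ, IsStrategy V0 E σ ∧ IsStrategy V1 E τ ∧
    WinRegion V0 E π W σ ∪ WinRegion V1 E π Wᶜ τ = Set.univ

/-- The set of values occurring infinitely often in `u`. -/
def InfOcc (u : ℕ → ℕ) : Set ℕ := {k | ∀ N, ∃ n, N ≤ n ∧ u n = k}

/-- `max_∞(u)`: the maximal value occurring infinitely often (as `sSup`,
well defined for bounded `u`). -/
noncomputable def MaxInf (u : ℕ → ℕ) : ℕ := sSup (InfOcc u)

/-- The parity winning condition for Player 0: `max_∞` is even. -/
def ParityWin : Set (ℕ → ℕ) := {u | Even (MaxInf u)}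

/-- A vertex is absorbing if its only outgoing edge is a self-loop. -/
def Absorbing {V : Type*} (E : Set (V × V)) (v : V) : Prop :=
  {u | (v, u) ∈ E} = {v}

/-- A vertex is vanishing if it has no incoming edge. -/
def Vanishing {V : Type*} (E : Set (V × V)) (v : V) : Prop :=
  ∀ u, (u, v) ∉ E

/-- A vertex is relevant if it is neither absorbing nor vanishing. -/
def Relevant {V : Type*} (E : Set (V × V)) (v : V) : Prop :=
  ¬ Absorbing E v ∧ ¬ Vanishing E v


/-! ### Section 1: prefix independence basics -/

universe u

section Basics

variable {V : Type u} {C : Type*} {Vi : Set V} {E : Set (V × V)} {π : V → C} {W : Set (ℕ → C)}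

lemma listAppend_ofFn (u : ℕ → C) (k : ℕ) :
    ListAppend (List.ofFn fun i : Fin k => u i) (fun n => u (n + k)) = u := by
  funext n
  simp only [ListAppend, List.length_ofFn]
  split_ifs with h
  · simp
  · congr 1; omega

lemma prefixIndependent_shift (hW : PrefixIndependent W)
    (u : ℕ → C) (k : ℕ) : (fun n => u (n + k)) ∈ W ↔ u ∈ W := by
  conv_rhs => rw [← listAppend_ofFn u k]
  exact (hW _ _).symm

lemma prefixIndependent_compl (hW : PrefixIndependent W) : PrefixIndependent Wᶜ := by
  intro w ρ
  simp [Set.mem_compl_iff, hW w ρ]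

lemma infOcc_listAppend (w : List ℕ) (ρ : ℕ → ℕ) : InfOcc (ListAppend w ρ) = InfOcc ρ := by
  ext k
  constructor
  · intro h N
    obtain ⟨n, hn, he⟩ := h (N + w.length)
    refine ⟨n - w.length, by omega, ?_⟩
    rw [← he]
    simp only [ListAppend]
    rw [dif_neg (by omega)]
  · intro h N
    obtain ⟨n, hn, he⟩ := h N
    refine ⟨n + w.length, by omega, ?_⟩
    simp only [ListAppend]
    rw [dif_neg (by omega)]
    simpa using he

lemma parity_prefixIndependent : PrefixIndependent (ParityWin) := by
  intro w ρ
  simp [ParityWin, MaxInf, infOcc_listAppend]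

/-- prepend a vertex to a run -/
private def consSeq (v : V) (ρ : ℕ → V) : ℕ → V := fun n =>
  match n with
  | 0 => v
  | n + 1 => ρ n

lemma winRegion_closed (hW : PrefixIndependent W)
    {σ : V → V} {v u : V} (hv : v ∈ WinRegion Vi E π W σ) (he : (v, u) ∈ E)
    (hc : v ∈ Vi → u = σ v) : u ∈ WinRegion Vi E π W σ := by
  intro ρ h0 hrun hcomp
  have hmem : (fun n => π (consSeq v ρ n)) ∈ W := by
    refine hv (consSeq v ρ) rfl ?_ ?_
    · intro n
      match n with
      | 0 => simpa [consSeq, h0] using he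
      | n + 1 => exact hrun n
    · intro n hn
      match n with
      | 0 => simpa [consSeq, h0] using hc hn
      | n + 1 => exact hcomp n hn
  have := (prefixIndependent_shift hW (fun n => π (consSeq v ρ n)) 1).2 hmem
  simpa [consSeq] using this

lemma winRegion_eventually (hW : PrefixIndependent W)
    {σ : V → V} {ρ : ℕ → V} {k : ℕ} (hrun : IsRun E ρ) (hcomp : Compatible Vi σ ρ)
    (hk : ρ k ∈ WinRegion Vi E π W σ) : (fun n => π (ρ n)) ∈ W := by
  have hmem : (fun n => π (ρ (n + k))) ∈ W := by
    refine hk (fun n => ρ (n + k)) (by simp) ?_ ?_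
    · intro n
      have := hrun (n + k)
      simpa [Nat.add_right_comm n 1 k] using this
    · intro n hn
      have := hcomp (n + k) hn
      simpa [Nat.add_right_comm n 1 k] using this
  exact (prefixIndependent_shift hW _ k).1 hmem

lemma winRegion_subset_all {σ : V → V} (hσ : IsStrategy Vi E σ) :
    WinRegion Vi E π W σ ⊆ WinRegionAll Vi E π W :=
  fun _ hv => ⟨σ, hσ, hv⟩

end Basics

/-! ### Section 2: uniformization of memoryless winning strategies -/

section Uniform

variable {V : Type u} {C : Type*}

lemma uniform_strategy (Vi : Set V) (E : Set (V × V)) (π : V → C) (W : Set (ℕ → C))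
    (hW : PrefixIndependent W) (hE : ∀ v : V, ∃ u, (v, u) ∈ E) :
    ∃ σ, IsStrategy Vi E σ ∧ WinRegionAll Vi E π W ⊆ WinRegion Vi E π W σ := by
  classical
  set All := WinRegionAll Vi E π W with hAlldef
  have hch : ∀ w : V, ∃ s : V → V, w ∈ All → IsStrategy Vi E s ∧ WinsFrom Vi E π W s w := by
    intro w
    by_cases h : w ∈ All
    · obtain ⟨s, hs1, hs2⟩ := h
      exact ⟨s, fun _ => ⟨hs1, hs2⟩⟩
    · exact ⟨fun v => Classical.choose (hE v), fun hw => absurd hw h⟩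
  choose str hstr using hch
  let r : V → V → Prop := WellOrderingRel
  have hwo : IsWellOrder V r := WellOrderingRel.isWellOrder
  have hwf : WellFounded r := hwo.toIsWellFounded.wf
  let S : V → Set V := fun v => {w | w ∈ All ∧ v ∈ WinRegion Vi E π W (str w)}
  have hSne : ∀ v, v ∈ All → (S v).Nonempty := fun v hv => ⟨v, hv, (hstr v hv).2⟩
  let g : V → V := fun v => if h : v ∈ All then hwf.min (S v) (hSne v h) else v
  have hgS : ∀ v, v ∈ All → g v ∈ S v := by
    intro v h
    simp only [g, dif_pos h]
    exact hwf.min_mem _ _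
  have hgmin : ∀ v, v ∈ All → ∀ w ∈ S v, ¬ r w (g v) := by
    intro v h w hw
    simp only [g, dif_pos h]
    exact hwf.not_lt_min _ hw
  let σ : V → V := fun v => if h : v ∈ All then str (g v) v else Classical.choose (hE v)
  have hσAll : ∀ v, v ∈ All → σ v = str (g v) v := fun v h => by simp only [σ, dif_pos h]
  refine ⟨σ, ?_, ?_⟩
  · intro v hv
    by_cases h : v ∈ All
    · rw [hσAll v h]
      exact (hstr (g v) (hgS v h).1).1 v hv
    · simp only [σ, dif_neg h]
      exact Classical.choose_spec (hE v)
  · intro v hv ρ h0 hrun hcomp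
    -- every vertex along the run is in All
    have hclose : ∀ n, ρ n ∈ All → ρ (n+1) ∈ WinRegion Vi E π W (str (g (ρ n))) := by
      intro n ih
      refine winRegion_closed hW (hgS (ρ n) ih).2 (hrun n) ?_
      intro hni
      rw [hcomp n hni, hσAll (ρ n) ih]
    have key : ∀ n, ρ n ∈ All := by
      intro n
      induction n with
      | zero => rwa [h0]
      | succ n ih =>
        exact winRegion_subset_all (hstr _ (hgS (ρ n) ih).1).1 (hclose n ih)
    have hstep : ∀ n, g (ρ (n+1)) = g (ρ n) ∨ r (g (ρ (n+1))) (g (ρ n)) := by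
      intro n
      have hmem : g (ρ n) ∈ S (ρ (n+1)) := ⟨(hgS (ρ n) (key n)).1, hclose n (key n)⟩
      have hnot := hgmin (ρ (n+1)) (key (n+1)) (g (ρ n)) hmem
      rcases trichotomous_of (WellOrderingRel : V → V → Prop) (g (ρ (n+1))) (g (ρ n)) with h | h | h
      · exact Or.inr h
      · exact Or.inl h
      · exact absurd h hnot
    -- stabilization
    obtain ⟨n0, hn0⟩ : ∃ n0, ∀ k, g (ρ (n0 + k)) = g (ρ n0) := by
      let T : Set V := Set.range (fun n => g (ρ n))
      have hTne : T.Nonempty := ⟨g (ρ 0), 0, rfl⟩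
      obtain ⟨n0, hn0⟩ := hwf.min_mem T hTne
      have hn0' : g (ρ n0) = hwf.min T hTne := hn0
      refine ⟨n0, ?_⟩
      intro k
      induction k with
      | zero => rfl
      | succ k ih =>
        rcases hstep (n0 + k) with h | h
        · exact h.trans ih
        · exfalso
          rw [ih, hn0'] at h
          exact hwf.not_lt_min T ⟨n0 + k + 1, rfl⟩ h
    -- the tail is compatible with a single strategy
    have htail : (fun n => π (ρ (n + n0))) ∈ W := by
      refine (hgS (ρ n0) (key n0)).2 (fun n => ρ (n + n0)) (by simp) ?_ ?_
      · intro n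
        have := hrun (n + n0)
        simpa [Nat.add_right_comm n 1 n0] using this
      · intro n hn
        have h1 := hcomp (n + n0) hn
        rw [hσAll _ (key _)] at h1
        have h2 : g (ρ (n + n0)) = g (ρ n0) := by
          have := hn0 n
          rwa [Nat.add_comm n0 n] at this
        rw [h2] at h1
        simpa [Nat.add_right_comm n 1 n0] using h1
    exact (prefixIndependent_shift hW _ n0).1 htail

end Uniform

/-! ### Section 3: closure of the full winning region -/

section Closure

variable {V : Type u} {C : Type*} {Vi : Set V} {E : Set (V × V)} {π : V → C} {W : Set (ℕ → C)}

lemma win_extend (hW : PrefixIndependent W) {τ τ' : V → V} {v : V}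
    (hagree : ∀ w, w ≠ v → τ' w = τ w)
    (h1 : ∀ u, (v, u) ∈ E → (v ∈ Vi → u = τ' v) → u ∈ WinRegion Vi E π W τ)
    (hv : v ∉ WinRegion Vi E π W τ) : v ∈ WinRegion Vi E π W τ' := by
  intro ρ h0 hrun hcomp
  have hmem : ∀ n, ρ (n+1) ∈ WinRegion Vi E π W τ := by
    intro n
    induction n with
    | zero =>
      refine h1 (ρ 1) (h0 ▸ hrun 0) ?_
      intro hvi
      rw [← h0]
      exact hcomp 0 (h0 ▸ hvi)
    | succ n ih =>
      have hne : ρ (n+1) ≠ v := fun he => hv (he ▸ ih)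
      refine winRegion_closed hW ih (hrun (n+1)) ?_
      intro hvi
      rw [hcomp (n+1) hvi, hagree _ hne]
  have htail : (fun n => π (ρ (n+1))) ∈ W := by
    refine hmem 0 (fun n => ρ (n+1)) rfl (fun n => hrun (n+1)) ?_
    intro n hn
    have h2 := hcomp (n+1) hn
    have hne : ρ (n+1) ≠ v := fun he => hv (he ▸ hmem n)
    show ρ (n + 1 + 1) = τ (ρ (n + 1))
    rw [h2, hagree _ hne]
  exact (prefixIndependent_shift hW _ 1).1 htail

lemma winRegionAll_closed (hW : PrefixIndependent W) (hE : ∀ v : V, ∃ u, (v, u) ∈ E) (v : V)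
    (h : (v ∈ Vi ∧ ∃ u, (v, u) ∈ E ∧ u ∈ WinRegionAll Vi E π W) ∨
         (v ∉ Vi ∧ ∀ u, (v, u) ∈ E → u ∈ WinRegionAll Vi E π W)) :
    v ∈ WinRegionAll Vi E π W := by
  classical
  obtain ⟨τ, hτ, hτw⟩ := uniform_strategy Vi E π W hW hE
  by_cases hv : v ∈ WinRegion Vi E π W τ
  · exact winRegion_subset_all hτ hv
  rcases h with ⟨hvi, u, he, hu⟩ | ⟨hvi, hall⟩
  · let τ' := Function.update τ v u
    have hwin : v ∈ WinRegion Vi E π W τ' := by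
      refine win_extend hW (fun w hw => Function.update_of_ne hw _ _) ?_ hv
      intro u' he' hc
      have heq : u' = u := by
        rw [hc hvi]
        simp [τ', Function.update_self]
      exact heq ▸ hτw hu
    have hstr : IsStrategy Vi E τ' := by
      intro w hw
      by_cases hwv : w = v
      · subst hwv
        simpa [τ', Function.update_self] using he
      · rw [show τ' w = τ w from Function.update_of_ne hwv _ _]
        exact hτ w hw
    exact ⟨τ', hstr, hwin⟩
  · have hwin : v ∈ WinRegion Vi E π W τ :=
      win_extend hW (τ' := τ) (fun _ _ => rfl) (fun u' he' _ => hτw (hall u' he')) hv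
    exact winRegion_subset_all hτ hwin

end Closure

/-! ### Section 4: attractors -/

section Attractor

variable {V : Type u}

/-- One step of the attractor construction. -/
def attrStep (Vi : Set V) (E : Set (V × V)) (T S : Set V) : Set V :=
  T ∪ {v | (v ∈ Vi ∧ ∃ u, (v, u) ∈ E ∧ u ∈ S) ∨ (v ∉ Vi ∧ ∀ u, (v, u) ∈ E → u ∈ S)}

lemma attrStep_mono {Vi : Set V} {E : Set (V × V)} {T : Set V} {S S' : Set V} (h : S ⊆ S') :
    attrStep Vi E T S ⊆ attrStep Vi E T S' := by
  rintro v (hv | hv)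
  · exact Or.inl hv
  rcases hv with ⟨hvi, u, he, hu⟩ | ⟨hvi, hall⟩
  · exact Or.inr (Or.inl ⟨hvi, u, he, h hu⟩)
  · exact Or.inr (Or.inr ⟨hvi, fun u he => h (hall u he)⟩)

/-- Ordinal approximations of the attractor. -/
noncomputable def attrA (Vi : Set V) (E : Set (V × V)) (T : Set V) : Ordinal.{u} → Set V :=
  fun α => attrStep Vi E T (⋃ β : {β : Ordinal.{u} // β < α}, attrA Vi E T β.1)
termination_by α => α
decreasing_by exact β.2

lemma attrA_eq (Vi : Set V) (E : Set (V × V)) (T : Set V) (α : Ordinal.{u}) :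
    attrA Vi E T α = attrStep Vi E T (⋃ β : {β : Ordinal.{u} // β < α}, attrA Vi E T β.1) := by
  rw [attrA]

/-- The attractor of player `Vi` to target `T`. -/
def Attr (Vi : Set V) (E : Set (V × V)) (T : Set V) : Set V :=
  {v | ∃ α : Ordinal.{u}, v ∈ attrA Vi E T α}

/-- The attractor rank. -/
noncomputable def attrRank (Vi : Set V) (E : Set (V × V)) (T : Set V) (v : V) : Ordinal.{u} :=
  sInf {α : Ordinal.{u} | v ∈ attrA Vi E T α}

variable {Vi : Set V} {E : Set (V × V)} {T : Set V}

lemma mem_attrA_rank {v : V} (h : v ∈ Attr Vi E T) : v ∈ attrA Vi E T (attrRank Vi E T v) :=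
  csInf_mem h

lemma attrRank_le {v : V} {α : Ordinal.{u}} (h : v ∈ attrA Vi E T α) : attrRank Vi E T v ≤ α :=
  csInf_le' h

lemma attr_cases {v : V} (hv : v ∈ Attr Vi E T) (hT : v ∉ T) :
    (v ∈ Vi ∧ ∃ u, (v, u) ∈ E ∧ u ∈ Attr Vi E T ∧ attrRank Vi E T u < attrRank Vi E T v) ∨
    (v ∉ Vi ∧ ∀ u, (v, u) ∈ E → u ∈ Attr Vi E T ∧ attrRank Vi E T u < attrRank Vi E T v) := by
  have h := mem_attrA_rank hv
  rw [attrA_eq] at h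
  rcases h with hT' | h
  · exact absurd hT' hT
  rcases h with ⟨hvi, u, he, hu⟩ | ⟨hvi, hall⟩
  · obtain ⟨⟨β, hβ⟩, hu⟩ := Set.mem_iUnion.1 hu
    exact Or.inl ⟨hvi, u, he, ⟨β, hu⟩, lt_of_le_of_lt (attrRank_le hu) hβ⟩
  · refine Or.inr ⟨hvi, fun u he => ?_⟩
    obtain ⟨⟨β, hβ⟩, hu⟩ := Set.mem_iUnion.1 (hall u he)
    exact ⟨⟨β, hu⟩, lt_of_le_of_lt (attrRank_le hu) hβ⟩

lemma subset_attr : T ⊆ Attr Vi E T := by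
  intro v hv
  exact ⟨0, by rw [attrA_eq]; exact Or.inl hv⟩

lemma attr_push {v u : V} (hvi : v ∈ Vi) (he : (v, u) ∈ E) (hu : u ∈ Attr Vi E T) :
    v ∈ Attr Vi E T := by
  refine ⟨attrRank Vi E T u + 1, ?_⟩
  rw [attrA_eq]
  refine Or.inr (Or.inl ⟨hvi, u, he, Set.mem_iUnion.2 ?_⟩)
  exact ⟨⟨attrRank Vi E T u, lt_add_one _⟩, mem_attrA_rank hu⟩

lemma attr_opp {v : V} (hvi : v ∉ Vi) (hall : ∀ u, (v, u) ∈ E → u ∈ Attr Vi E T) :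
    v ∈ Attr Vi E T := by
  refine ⟨(⨆ u : {u : V // (v, u) ∈ E}, attrRank Vi E T u.1) + 1, ?_⟩
  rw [attrA_eq]
  refine Or.inr (Or.inr ⟨hvi, fun u he => Set.mem_iUnion.2 ?_⟩)
  refine ⟨⟨attrRank Vi E T u, ?_⟩, mem_attrA_rank (hall u he)⟩
  exact lt_of_le_of_lt (Ordinal.le_iSup (fun u : {u : V // (v, u) ∈ E} => attrRank Vi E T u.1) ⟨u, he⟩)
    (lt_add_one _)

lemma attr_reach (ρ : ℕ → V) (hrun : IsRun E ρ)
    (hstep : ∀ n, ρ n ∈ Attr Vi E T → ρ n ∉ T → ρ n ∈ Vi →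
      ρ (n+1) ∈ Attr Vi E T ∧ attrRank Vi E T (ρ (n+1)) < attrRank Vi E T (ρ n)) :
    ∀ n, ρ n ∈ Attr Vi E T → ∃ m, n ≤ m ∧ ρ m ∈ T := by
  have main : ∀ α : Ordinal.{u}, ∀ n, ρ n ∈ Attr Vi E T → attrRank Vi E T (ρ n) = α →
      ∃ m, n ≤ m ∧ ρ m ∈ T := by
    intro α
    induction α using Ordinal.induction with
    | h α IH =>
      intro n hn hr
      by_cases hT : ρ n ∈ T
      · exact ⟨n, le_refl n, hT⟩
      rcases attr_cases hn hT with ⟨hvi, _⟩ | ⟨hvi, hall⟩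
      · obtain ⟨hA, hlt⟩ := hstep n hn hT hvi
        obtain ⟨m, hm, hmT⟩ := IH _ (hr ▸ hlt) (n+1) hA rfl
        exact ⟨m, by omega, hmT⟩
      · obtain ⟨hA, hlt⟩ := hall (ρ (n+1)) (hrun n)
        obtain ⟨m, hm, hmT⟩ := IH _ (hr ▸ hlt) (n+1) hA rfl
        exact ⟨m, by omega, hmT⟩
  exact fun n hn => main _ n hn rfl

lemma attr_choice (Vi : Set V) (E : Set (V × V)) (T : Set V) :
    ∃ f : V → V, ∀ v, v ∈ Attr Vi E T → v ∉ T → v ∈ Vi →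
      (v, f v) ∈ E ∧ f v ∈ Attr Vi E T ∧ attrRank Vi E T (f v) < attrRank Vi E T v := by
  have h : ∀ v : V, ∃ u : V, v ∈ Attr Vi E T → v ∉ T → v ∈ Vi →
      (v, u) ∈ E ∧ u ∈ Attr Vi E T ∧ attrRank Vi E T u < attrRank Vi E T v := by
    intro v
    by_cases hv : v ∈ Attr Vi E T ∧ v ∉ T ∧ v ∈ Vi
    · obtain ⟨h1, h2, h3⟩ := hv
      rcases attr_cases h1 h2 with ⟨_, u, he, hu, hlt⟩ | ⟨hvi, _⟩
      · exact ⟨u, fun _ _ _ => ⟨he, hu, hlt⟩⟩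
      · exact absurd h3 hvi
    · exact ⟨v, fun h1 h2 h3 => absurd ⟨h1, h2, h3⟩ hv⟩
  choose f hf using h
  exact ⟨f, hf⟩

end Attractor

/-! ### Section 5: MaxInf facts and subgame transfer -/

lemma maxInf_eq_of_top {u : ℕ → ℕ} {B : ℕ} (hb : ∀ n, u n ≤ B)
    (htop : ∀ N, ∃ n, N ≤ n ∧ u n = B) : MaxInf u = B := by
  have hmem : B ∈ InfOcc u := htop
  have hbdd : ∀ k ∈ InfOcc u, k ≤ B := by
    intro k hk
    obtain ⟨n, _, he⟩ := hk 0
    exact he ▸ hb n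
  exact le_antisymm (csSup_le ⟨B, hmem⟩ hbdd) (le_csSup ⟨B, fun k hk => hbdd k hk⟩ hmem)

lemma subgame_transfer {V : Type u} {C : Type*} {Vi : Set V} {E : Set (V × V)} {π : V → C}
    {W : Set (ℕ → C)} {S : Set V} {σ' : S → S}
    {ρ : ℕ → V} (hmem : ∀ n, ρ n ∈ S) (hrun : IsRun E ρ)
    (hcomp : ∀ n, ρ n ∈ Vi → ρ (n+1) = (σ' ⟨ρ n, hmem n⟩ : V))
    (hwin : WinsFrom (Subtype.val ⁻¹' Vi) {p : S × S | ((p.1 : V), (p.2 : V)) ∈ E}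
      (fun x => π x) W σ' ⟨ρ 0, hmem 0⟩) :
    (fun n => π (ρ n)) ∈ W :=
  hwin (fun n => ⟨ρ n, hmem n⟩) rfl (fun n => hrun n)
    (fun n hn => Subtype.ext (hcomp n hn))

/-! ### Section 6: the Zielonka induction step -/

lemma step_lemma {V : Type u} (Vi Vo : Set V) (E : Set (V × V)) (π : V → ℕ) (B' : ℕ)
    (hdisj : ∀ v ∈ Vi, v ∉ Vo) (hcov : ∀ v, v ∉ Vi → v ∈ Vo)
    (hE : ∀ v : V, ∃ u, (v, u) ∈ E)
    (hbd : ∀ v, π v ≤ B' + 1)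
    (Wi : Set (ℕ → ℕ)) (hWpi : PrefixIndependent Wi) (hWopi : PrefixIndependent Wiᶜ)
    (hTop : ∀ u : ℕ → ℕ, (∀ n, u n ≤ B' + 1) → (∀ N, ∃ n, N ≤ n ∧ u n = B' + 1) → u ∈ Wi)
    (IH : ∀ (V2 : Type u) (Vi2 Vo2 : Set V2) (E2 : Set (V2 × V2)) (π2 : V2 → ℕ),
      (∀ v ∈ Vi2, v ∉ Vo2) → (∀ v, v ∉ Vi2 → v ∈ Vo2) → (∀ v : V2, ∃ u, (v, u) ∈ E2) →
      (∀ v, π2 v ≤ B') →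
      WinRegionAll Vi2 E2 π2 Wi ∪ WinRegionAll Vo2 E2 π2 Wiᶜ = Set.univ) :
    (WinRegionAll Vo E π Wiᶜ)ᶜ ⊆ WinRegionAll Vi E π Wi := by
  classical
  set L := WinRegionAll Vo E π Wiᶜ with hLdef
  set X := Lᶜ with hXdef
  -- trap facts
  have hT2 : ∀ v ∈ Vo, v ∈ X → ∀ u, (v, u) ∈ E → u ∈ X := by
    intro v hvo hvx u he
    by_contra hu
    have hu' : u ∈ L := not_not.1 hu
    exact hvx (winRegionAll_closed hWopi hE v (Or.inl ⟨hvo, u, he, hu'⟩))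
  have hT1 : ∀ v ∈ Vi, v ∈ X → ∃ u, (v, u) ∈ E ∧ u ∈ X := by
    intro v hvi hvx
    by_contra hno
    push_neg at hno
    refine hvx (winRegionAll_closed hWopi hE v (Or.inr ⟨hdisj v hvi, fun u he => ?_⟩))
    exact not_not.1 (hno u he)
  -- restricted edge relation
  set EX : Set (V × V) := {p | p ∈ E ∧ p.1 ∈ X ∧ p.2 ∈ X} with hEXdef
  have hEXsub : EX ⊆ E := fun p hp => hp.1
  have hEX : ∀ v ∈ X, ∃ u, (v, u) ∈ EX := by
    intro v hvx
    by_cases hvi : v ∈ Vi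
    · obtain ⟨u, he, hu⟩ := hT1 v hvi hvx
      exact ⟨u, he, hvx, hu⟩
    · obtain ⟨u, he⟩ := hE v
      exact ⟨u, he, hvx, hT2 v (hcov v hvi) hvx u he⟩
  -- the top-priority target and its attractor
  set N : Set V := {v | v ∈ X ∧ π v = B' + 1} with hNdef
  set A : Set V := Attr Vi EX N with hAdef
  set Y : Set V := X \ A with hYdef
  have hNX : N ⊆ X := fun v hv => hv.1
  have hAX : ∀ v ∈ X, v ∉ Y → v ∈ A := fun v hv hvy => by
    by_contra h
    exact hvy ⟨hv, h⟩
  -- Y is a subgame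
  have hEY : ∀ v ∈ Y, ∃ u, (v, u) ∈ E ∧ u ∈ Y := by
    intro v hv
    by_cases hvi : v ∈ Vi
    · obtain ⟨u, he, hu⟩ := hT1 v hvi hv.1
      have heX : (v, u) ∈ EX := ⟨he, hv.1, hu⟩
      refine ⟨u, he, hu, fun hA => ?_⟩
      exact hv.2 (attr_push hvi heX hA)
    · by_contra hno
      push_neg at hno
      refine hv.2 (attr_opp hvi fun u he => ?_)
      have huX : u ∈ X := he.2.2
      have huA : u ∈ A := hAX u huX (fun huY => hno u he.1 huY)
      exact huA
  have hbdY : ∀ v ∈ Y, π v ≤ B' := by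
    intro v hv
    have h1 := hbd v
    have h2 : π v ≠ B' + 1 := by
      intro h
      exact hv.2 (subset_attr ⟨hv.1, h⟩)
    omega
  -- the subgame on Y
  set Vi' : Set Y := Subtype.val ⁻¹' Vi with hVi'def
  set Vo' : Set Y := Subtype.val ⁻¹' Vo with hVo'def
  set E' : Set (Y × Y) := {p | ((p.1 : V), (p.2 : V)) ∈ E} with hE'def
  set π' : Y → ℕ := fun x => π x with hπ'def
  have hE'tot : ∀ x : Y, ∃ y : Y, (x, y) ∈ E' := by
    intro x
    obtain ⟨u, he, hu⟩ := hEY x x.2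
    exact ⟨⟨u, hu⟩, he⟩
  have hIH : WinRegionAll Vi' E' π' Wi ∪ WinRegionAll Vo' E' π' Wiᶜ = Set.univ :=
    IH Y Vi' Vo' E' π' (fun x hx => hdisj x hx) (fun x hx => hcov x hx) hE'tot
      (fun x => hbdY x x.2)
  -- the uniform strategy of the opponent on L
  obtain ⟨τL, hτLs, hτLw⟩ := uniform_strategy Vo E π Wiᶜ hWopi hE
  -- the opponent's winning region in the subgame on Y is empty
  have hYempty : ∀ x : Y, x ∉ WinRegionAll Vo' E' π' Wiᶜ := by
    rintro x ⟨τ', hτ's, hτ'w⟩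
    -- combined ambient strategy for the opponent
    set τ : V → V := fun w => if h : w ∈ Y then (τ' ⟨w, h⟩ : V) else τL w with hτdef
    have hτY : ∀ w (h : w ∈ Y), τ w = (τ' ⟨w, h⟩ : V) := by
      intro w h
      simp only [hτdef, dif_pos h]
    have hτL' : ∀ w, w ∉ Y → τ w = τL w := by
      intro w h
      simp only [hτdef, dif_neg h]
    have hτs : IsStrategy Vo E τ := by
      intro w hw
      by_cases h : w ∈ Y
      · rw [hτY w h]
        exact hτ's ⟨w, h⟩ hw
      · rw [hτL' w h]
        exact hτLs w hw
    have hwins : WinsFrom Vo E π Wiᶜ τ (x : V) := by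
      intro ρ h0 hrun hcomp
      by_cases hall : ∀ n, ρ n ∈ Y
      · refine subgame_transfer (Vi := Vo) (σ' := τ') (S := Y) hall hrun ?_ ?_
        · intro n hn
          rw [hcomp n hn, hτY _ (hall n)]
        · have hx0 : (⟨ρ 0, hall 0⟩ : Y) = x := Subtype.ext h0
          rw [hx0]
          exact hτ'w
      · push_neg at hall
        -- first exit from Y
        have hex : ∃ m, ρ m ∉ Y := hall
        set m := Nat.find hex with hmdef
        have hm : ρ m ∉ Y := Nat.find_spec hex
        have hm0 : m ≠ 0 := by
          intro h
          rw [h, h0] at hm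
          exact hm x.2
        obtain ⟨k, hk⟩ : ∃ k, m = k + 1 := ⟨m - 1, by omega⟩
        have hkY : ρ k ∈ Y := by
          by_contra h
          exact Nat.find_min hex (by omega : k < m) h
        have hkVi : ρ k ∈ Vi := by
          by_contra h
          have hvo := hcov _ h
          have heq := hcomp k hvo
          have hm' : ρ (k+1) ∉ Y := by rw [← hk]; exact hm
          rw [heq, hτY _ hkY] at hm'
          exact hm' (τ' ⟨ρ k, hkY⟩).2
        have hk1L : ρ (k + 1) ∈ L := by
          by_contra h
          have hX : ρ (k+1) ∈ X := h
          have hEXk : (ρ k, ρ (k+1)) ∈ EX := ⟨hrun k, hkY.1, hX⟩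
          have hnA : ρ (k+1) ∉ A := by
            intro hA
            exact hkY.2 (attr_push hkVi hEXk hA)
          have : ρ (k+1) ∈ Y := ⟨hX, hnA⟩
          rw [← hk] at this
          exact hm this
        -- from position k+1 on, the play stays in L, compatible with τL
        have hinv : ∀ j, k + 1 ≤ j → ρ j ∈ L ∧ ρ j ∈ WinRegion Vo E π Wiᶜ τL := by
          intro j hj
          induction j, hj using Nat.le_induction with
          | base => exact ⟨hk1L, hτLw hk1L⟩
          | succ j hj ihj =>
            obtain ⟨hL1, hW1⟩ := ihj
            have hnY : ρ j ∉ Y := fun hY => hY.1 hL1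
            have hnext : ρ (j+1) ∈ WinRegion Vo E π Wiᶜ τL := by
              refine winRegion_closed hWopi hW1 (hrun j) ?_
              intro hvo
              rw [hcomp j hvo, hτL' _ hnY]
            exact ⟨winRegion_subset_all hτLs hnext, hnext⟩
        -- conclude
        have htail : (fun n => π (ρ (n + (k+1)))) ∈ Wiᶜ := by
          refine (hinv (k+1) le_rfl).2 (fun n => ρ (n + (k+1))) (by simp) ?_ ?_
          · intro n
            have := hrun (n + (k+1))
            simpa [Nat.add_right_comm n 1 (k+1)] using this
          · intro n hn
            have h1 := hcomp (n + (k+1)) hn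
            have hnY : ρ (n + (k+1)) ∉ Y := fun hY => hY.1 (hinv (n + (k+1)) (by omega)).1
            rw [hτL' _ hnY] at h1
            simpa [Nat.add_right_comm n 1 (k+1)] using h1
        exact (prefixIndependent_shift hWopi _ (k+1)).1 htail
    exact x.2.1 ⟨τ, hτs, hwins⟩
  -- hence player i wins everywhere in the subgame on Y
  have hYwin : ∀ x : Y, x ∈ WinRegionAll Vi' E' π' Wi := by
    intro x
    have : x ∈ WinRegionAll Vi' E' π' Wi ∪ WinRegionAll Vo' E' π' Wiᶜ := by
      rw [hIH]
      trivial
    rcases this with h | h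
    · exact h
    · exact absurd h (hYempty x)
  obtain ⟨σY, hσYs, hσYw⟩ := uniform_strategy Vi' E' π' Wi hWpi hE'tot
  have hσYwin : ∀ x : Y, WinsFrom Vi' E' π' Wi σY x := fun x => hσYw (hYwin x)
  -- attractor strategy and auxiliary choices
  obtain ⟨f, hf⟩ := attr_choice Vi EX N
  have hg : ∀ v : V, ∃ u : V, v ∈ Vi → v ∈ X → ((v, u) ∈ E ∧ u ∈ X) := by
    intro v
    by_cases h : v ∈ Vi ∧ v ∈ X
    · obtain ⟨u, he, hu⟩ := hT1 v h.1 h.2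
      exact ⟨u, fun _ _ => ⟨he, hu⟩⟩
    · exact ⟨v, fun h1 h2 => absurd ⟨h1, h2⟩ h⟩
  choose g hgs using hg
  choose d hd using hE
  -- the combined strategy for player i
  set σ : V → V := fun w =>
    if h : w ∈ Y then (σY ⟨w, h⟩ : V)
    else if h2 : w ∈ Vi ∧ w ∈ A ∧ w ∉ N then f w
    else if h3 : w ∈ Vi ∧ w ∈ X then g w
    else d w with hσdef
  have hσY : ∀ w (h : w ∈ Y), σ w = (σY ⟨w, h⟩ : V) := by
    intro w h
    simp only [hσdef, dif_pos h]
  have hσA : ∀ w, w ∉ Y → w ∈ Vi → w ∈ A → w ∉ N → σ w = f w := by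
    intro w h h1 h2 h3
    simp only [hσdef, dif_neg h, dif_pos (⟨h1, h2, h3⟩ : w ∈ Vi ∧ w ∈ A ∧ w ∉ N)]
  have hσN : ∀ w, w ∉ Y → ¬(w ∈ Vi ∧ w ∈ A ∧ w ∉ N) → w ∈ Vi → w ∈ X → σ w = g w := by
    intro w h h2 h3 h4
    simp only [hσdef, dif_neg h, dif_neg h2, dif_pos (⟨h3, h4⟩ : w ∈ Vi ∧ w ∈ X)]
  have hσs : IsStrategy Vi E σ := by
    intro w hw
    by_cases h : w ∈ Y
    · rw [hσY w h]
      exact hσYs ⟨w, h⟩ hw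
    by_cases h2 : w ∈ Vi ∧ w ∈ A ∧ w ∉ N
    · rw [hσA w h h2.1 h2.2.1 h2.2.2]
      exact hEXsub (hf w h2.2.1 h2.2.2 h2.1).1
    by_cases h3 : w ∈ X
    · rw [hσN w h h2 hw h3]
      exact (hgs w hw h3).1
    · simp only [hσdef, dif_neg h, dif_neg h2, dif_neg (fun hc : w ∈ Vi ∧ w ∈ X => h3 hc.2)]
      exact hd w
  -- σ wins from every vertex of X
  intro v hv
  refine ⟨σ, hσs, ?_⟩
  intro ρ h0 hrun hcomp
  -- the play stays in X
  have hX : ∀ n, ρ n ∈ X := by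
    intro n
    induction n with
    | zero => rwa [h0]
    | succ n ihn =>
      by_cases hvi : ρ n ∈ Vi
      · rw [hcomp n hvi]
        by_cases h : ρ n ∈ Y
        · rw [hσY _ h]
          exact (σY ⟨ρ n, h⟩).2.1
        by_cases h2 : ρ n ∈ A ∧ ρ n ∉ N
        · rw [hσA _ h hvi h2.1 h2.2]
          exact (hf (ρ n) h2.1 h2.2 hvi).1.2.2
        · rw [hσN _ h (fun hc => h2 ⟨hc.2.1, hc.2.2⟩) hvi ihn]
          exact (hgs (ρ n) hvi ihn).2
      · exact hT2 (ρ n) (hcov _ hvi) ihn (ρ (n+1)) (hrun n)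
  by_cases hev : ∃ m, ∀ n, m ≤ n → ρ n ∈ Y
  · -- the play eventually stays in Y : use the subgame strategy
    obtain ⟨m, hm⟩ := hev
    have hmem : ∀ n, ρ (n + m) ∈ Y := fun n => hm _ (by omega)
    have htail : (fun n => π (ρ (n + m))) ∈ Wi := by
      refine subgame_transfer (Vi := Vi) (σ' := σY) (S := Y) hmem (fun n => by
        have := hrun (n + m)
        simpa [Nat.add_right_comm n 1 m] using this) ?_ ?_
      · intro n hn
        have h1 := hcomp (n + m) hn
        rw [hσY _ (hmem n)] at h1
        simpa [Nat.add_right_comm n 1 m] using h1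
      · exact hσYwin _
    exact (prefixIndependent_shift hWpi _ m).1 htail
  · -- the play visits the attractor infinitely often : top priority occurs infinitely often
    push_neg at hev
    have hrunX : IsRun EX ρ := fun n => ⟨hrun n, hX n, hX (n+1)⟩
    have hstepA : ∀ n, ρ n ∈ Attr Vi EX N → ρ n ∉ N → ρ n ∈ Vi →
        ρ (n+1) ∈ Attr Vi EX N ∧ attrRank Vi EX N (ρ (n+1)) < attrRank Vi EX N (ρ n) := by
      intro n hA hN hvi
      have hnY : ρ n ∉ Y := fun hY => hY.2 hA
      have h1 := hcomp n hvi
      rw [hσA _ hnY hvi hA hN] at h1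
      obtain ⟨_, h2, h3⟩ := hf (ρ n) hA hN hvi
      rw [h1]
      exact ⟨h2, h3⟩
    have hreach := attr_reach (Vi := Vi) (E := EX) (T := N) ρ hrunX hstepA
    have hNocc : ∀ m0, ∃ n, m0 ≤ n ∧ π (ρ n) = B' + 1 := by
      intro m0
      obtain ⟨n, hn1, hn2⟩ := hev m0
      have hA : ρ n ∈ Attr Vi EX N := hAX _ (hX n) hn2
      obtain ⟨mm, hmm1, hmm2⟩ := hreach n hA
      exact ⟨mm, by omega, hmm2.2⟩
    exact hTop _ (fun n => hbd (ρ n)) hNocc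

/-! ### Section 7: memoryless determinacy of parity games -/

lemma parity_determined (B : ℕ) : ∀ {V : Type u} (V0 V1 : Set V) (E : Set (V × V)) (π : V → ℕ),
    Disjoint V0 V1 → V0 ∪ V1 = Set.univ → (∀ v : V, ∃ u, (v, u) ∈ E) → (∀ v, π v ≤ B) →
    WinRegionAll V0 E π ParityWin ∪ WinRegionAll V1 E π ParityWinᶜ = Set.univ := by
  induction B with
  | zero =>
    intro V V0 V1 E π _ _ hE hbd
    choose d hd using hE
    refine Set.eq_univ_of_forall fun v => Or.inl ⟨d, fun w _ => hd w, ?_⟩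
    intro ρ h0 hrun hcomp
    have hM : MaxInf (fun n => π (ρ n)) = 0 :=
      maxInf_eq_of_top (fun n => hbd (ρ n)) (fun N => ⟨N, le_rfl, Nat.le_zero.1 (hbd (ρ N))⟩)
    show Even (MaxInf _)
    rw [hM]
    exact Even.zero
  | succ B' IH =>
    intro V V0 V1 E π hdisj hcover hE hbd
    have hd01 : ∀ v ∈ V0, v ∉ V1 := fun v hv => Set.disjoint_left.1 hdisj hv
    have hd10 : ∀ v ∈ V1, v ∉ V0 := fun v hv => Set.disjoint_right.1 hdisj hv
    have hc01 : ∀ v, v ∉ V0 → v ∈ V1 := by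
      intro v hv
      have h : v ∈ V0 ∪ V1 := hcover ▸ Set.mem_univ v
      rcases h with h | h
      exacts [absurd h hv, h]
    have hc10 : ∀ v, v ∉ V1 → v ∈ V0 := by
      intro v hv
      have h : v ∈ V0 ∪ V1 := hcover ▸ Set.mem_univ v
      rcases h with h | h
      exacts [h, absurd h hv]
    have hPW : PrefixIndependent ParityWin := parity_prefixIndependent
    have hPWc : PrefixIndependent ParityWinᶜ := prefixIndependent_compl parity_prefixIndependent
    have hPWcc : PrefixIndependent (ParityWinᶜ)ᶜ := by
      rw [compl_compl]
      exact hPW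
    by_cases hpar : Even (B' + 1)
    · have hstep := step_lemma V0 V1 E π B' hd01 hc01 hE hbd ParityWin hPW hPWc
        (fun u hb ht => by
          show Even (MaxInf u)
          rw [maxInf_eq_of_top hb ht]
          exact hpar)
        (fun V2 Vi2 Vo2 E2 π2 hd2 hc2 hE2 hb2 =>
          IH Vi2 Vo2 E2 π2 (Set.disjoint_left.2 hd2)
            (Set.eq_univ_of_forall fun v => by
              by_cases h : v ∈ Vi2
              exacts [Or.inl h, Or.inr (hc2 v h)]) hE2 hb2)
      refine Set.eq_univ_of_forall fun v => ?_
      by_cases h : v ∈ WinRegionAll V1 E π ParityWinᶜ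
      exacts [Or.inr h, Or.inl (hstep h)]
    · have hstep := step_lemma V1 V0 E π B' hd10 hc10 hE hbd ParityWinᶜ hPWc hPWcc
        (fun u hb ht => by
          show ¬ Even (MaxInf u)
          rw [maxInf_eq_of_top hb ht]
          exact hpar)
        (fun V2 Vi2 Vo2 E2 π2 hd2 hc2 hE2 hb2 => by
          have h := IH Vo2 Vi2 E2 π2
            (Set.disjoint_right.2 hd2)
            (Set.eq_univ_of_forall fun v => by
              by_cases h : v ∈ Vi2
              exacts [Or.inr h, Or.inl (hc2 v h)]) hE2 hb2
          rw [compl_compl]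
          rw [Set.union_comm] at h
          exact h)
      rw [compl_compl] at hstep
      refine Set.eq_univ_of_forall fun v => ?_
      by_cases h : v ∈ WinRegionAll V0 E π ParityWin
      exacts [Or.inl h, Or.inr (hstep h)]

/-- every parity game with finitely many priorities is uniformly
memoryless determined. -/
theorem stmt4 {V : Type*} (V0 V1 : Set V) (E : Set (V × V)) (π : V → ℕ)
    (hdisj : Disjoint V0 V1) (hcover : V0 ∪ V1 = Set.univ)
    (hE : ∀ v : V, ∃ u, (v, u) ∈ E)
    (hbdd : ∃ B, ∀ v, π v ≤ B) :
    UniformlyDetermined V0 V1 E π ParityWin := by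
  obtain ⟨B, hbd⟩ := hbdd
  have huniv := parity_determined B V0 V1 E π hdisj hcover hE hbd
  obtain ⟨σ, hσs, hσw⟩ :=
    uniform_strategy V0 E π ParityWin parity_prefixIndependent hE
  obtain ⟨τ, hτs, hτw⟩ :=
    uniform_strategy V1 E π ParityWinᶜ (prefixIndependent_compl parity_prefixIndependent) hE
  refine ⟨σ, τ, hσs, hτs, Set.eq_univ_of_univ_subset ?_⟩
  rw [← huniv]
  exact Set.union_subset_union hσw hτw
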